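/- Let Y be an Esakia space and X a dense subspace such that ↑_X x is dense in ↑_Y x for every x ∈ X. Then the map sending a clopen upset U of Y to U ∩ X is a Heyting algebra embedding of ClopUp(Y) into the Heyting algebra Up(X) of all upsets of X; in particular, for clopen upsets U, V of Y: (U →_{ClopUp(Y)} V) ∩ X = (U ∩ X) →_{Up(X)} (V ∩ X), where E → F in Up(X) is {x ∈ X : ↑_X x ∩ E ⊆ F}. -/
import Mathlib


/-- Let `Y` be an Esakia space and `X` a dense subset such that `↑_X x` is dense in
`↑_Y x` for every `x ∈ X`. Then `U ↦ U ∩ X` is a Heyting algebra embedding of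
`ClopUp(Y)` into `Up(X)`: it is injective on clopen upsets and, for clopen upsets
`U, V` of `Y`, `(U → V) ∩ X = (U ∩ X) → (V ∩ X)`, where the implication in `Y` is
`Y \ ↓(U \ V)` and the implication in `Up(X)` is `{x ∈ X : ↑_X x ∩ E ⊆ F}`. -/
theorem esakia_compactification_heyting_embedding
    {Y : Type*} [TopologicalSpace Y] [PartialOrder Y] [CompactSpace Y] [T2Space Y]
    (hzd : TopologicalSpace.IsTopologicalBasis {s : Set Y | IsClopen s})
    (hpries : ∀ x y : Y, ¬ x ≤ y →
      ∃ U : Set Y, IsClopen U ∧ IsUpperSet U ∧ x ∈ U ∧ y ∉ U)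
    (hdown : ∀ W : Set Y, IsOpen W → IsOpen {y : Y | ∃ w ∈ W, y ≤ w})
    (X : Set Y) (hdense : Dense X)
    (hupdense : ∀ x ∈ X, Set.Ici x ⊆ closure (Set.Ici x ∩ X)) :
    (∀ U V : Set Y, IsClopen U → IsUpperSet U → IsClopen V → IsUpperSet V →
      U ∩ X = V ∩ X → U = V) ∧
    (∀ U V : Set Y, IsClopen U → IsUpperSet U → IsClopen V → IsUpperSet V →
      {y : Y | ∃ w ∈ U \ V, y ≤ w}ᶜ ∩ X =
        {x : Y | x ∈ X ∧ ∀ y ∈ X, x ≤ y → y ∈ U ∩ X → y ∈ V ∩ X}) := by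
  constructor
  · intro U V hU _ hV _ h
    have key : ∀ A B : Set Y, IsClopen A → IsClopen B → A ∩ X = B ∩ X → A ⊆ B := by
      intro A B hA hB hAB
      calc A ⊆ closure (A ∩ X) := hdense.open_subset_closure_inter hA.isOpen
        _ = closure (B ∩ X) := by rw [hAB]
        _ ⊆ closure B := closure_mono Set.inter_subset_left
        _ = B := hB.isClosed.closure_eq
    exact subset_antisymm (key U V hU hV h) (key V U hV hU h.symm)
  · intro U V hU _ hV _
    ext x
    simp only [Set.mem_inter_iff, Set.mem_compl_iff, Set.mem_setOf_eq]
    constructor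
    · rintro ⟨hnd, hxX⟩
      refine ⟨hxX, fun y hyX hxy ⟨hyU, _⟩ => ⟨?_, hyX⟩⟩
      by_contra hyV
      exact hnd ⟨y, ⟨hyU, hyV⟩, hxy⟩
    · rintro ⟨hxX, hall⟩
      refine ⟨?_, hxX⟩
      rintro ⟨w, hwUV, hxw⟩
      have hw : w ∈ closure (Set.Ici x ∩ X) := hupdense x hxX hxw
      have hopen : IsOpen (U \ V) := hU.isOpen.sdiff hV.isClosed
      rcases mem_closure_iff.mp hw _ hopen hwUV with ⟨y, hyUV, hyIci, hyX⟩
      exact hyUV.2 (hall y hyX hyIci ⟨hyUV.1, hyX⟩).1
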